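/- Let m > 0 be real, D ≥ 1 an integer, and h : ℝ^{1+D} → ℂ a Schwartz function with Fourier transform ĥ. Then the double integral ∫_{ℝ^D} ∫_{ℝ^D} |ĥ(ω_p + ω_q, p + q)|² dμ_m(p) dμ_m(q) is finite. -/

import Mathlib

open MeasureTheory Real FourierTransform

/-- `ω_p = √(m² + |p|²)` for `p ∈ ℝ^D`. -/
noncomputable def omegaM {D : ℕ} (m : ℝ) (p : EuclideanSpace ℝ (Fin D)) : ℝ :=
  Real.sqrt (m ^ 2 + ‖p‖ ^ 2)

/-- The measure `μ_m` on `ℝ^D` with density `p ↦ 1/((2π)^D · 2 ω_p)` w.r.t. Lebesgue measure. -/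
noncomputable def muM (m : ℝ) (D : ℕ) : Measure (EuclideanSpace ℝ (Fin D)) :=
  volume.withDensity fun p => ENNReal.ofReal (1 / ((2 * Real.pi) ^ D * (2 * omegaM m p)))

/-- The Fourier transform `ĥ(s, q) = ∫_{ℝ^{1+D}} h(x) e^{−i (s x⁰ + ⟨q, x⟩)} dx` of a function
`h : ℝ^{1+D} → ℂ`, where points of `ℝ^{1+D}` are written as pairs `(x⁰, x) ∈ ℝ × ℝ^D`. -/
noncomputable def fourierHat {D : ℕ} (h : ℝ × EuclideanSpace ℝ (Fin D) → ℂ)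
    (s : ℝ) (q : EuclideanSpace ℝ (Fin D)) : ℂ :=
  ∫ x : ℝ × EuclideanSpace ℝ (Fin D),
    h x * Complex.exp (-Complex.I * ((s * x.1 + (inner ℝ q x.2 : ℝ) : ℝ) : ℂ))

noncomputable def Lform (D : ℕ) :
    (ℝ × EuclideanSpace ℝ (Fin D)) →L[ℝ] (ℝ × EuclideanSpace ℝ (Fin D)) →L[ℝ] ℝ :=
  LinearMap.toContinuousLinearMap <|
    (LinearMap.toContinuousLinearMap.toLinearMap).comp <|
      LinearMap.mk₂ ℝ (fun x y => x.1 * y.1 + (inner ℝ x.2 y.2 : ℝ))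
        (fun x x' y => by simp [inner_add_left]; ring)
        (fun c x y => by simp [inner_smul_left]; ring)
        (fun x y y' => by simp [inner_add_right]; ring)
        (fun c x y => by simp [inner_smul_right]; ring)

lemma Lform_apply {D : ℕ} (x y : ℝ × EuclideanSpace ℝ (Fin D)) :
    Lform D x y = x.1 * y.1 + (inner ℝ x.2 y.2 : ℝ) := by
  simp [Lform]

lemma fourierHat_eq {D : ℕ} (h : ℝ × EuclideanSpace ℝ (Fin D) → ℂ)
    (s : ℝ) (q : EuclideanSpace ℝ (Fin D)) :
    fourierHat h s q = VectorFourier.fourierIntegral Real.fourierChar volume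
      (Lform D).toLinearMap₁₂ h ((2 * π)⁻¹ * s, (2 * π)⁻¹ • q) := by
  rw [VectorFourier.fourierIntegral, fourierHat]
  refine integral_congr_ae (Filter.Eventually.of_forall fun x => ?_)
  simp only [Circle.smul_def, Real.fourierChar_apply, ContinuousLinearMap.toLinearMap₁₂_apply_apply_apply,
    Lform_apply]
  rw [mul_comm (h x)]
  congr 1
  have hπ : (2 * π) ≠ 0 := by positivity
  have : (2 * π) * (x.1 * ((2 * π)⁻¹ * s) + (inner ℝ x.2 ((2 * π)⁻¹ • q) : ℝ))
      = s * x.1 + (inner ℝ q x.2 : ℝ) := by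
    rw [real_inner_smul_right, real_inner_comm]
    field_simp
  congr 1
  push_cast [← this]
  ring

lemma fourierHat_decay {D : ℕ} (h : SchwartzMap (ℝ × EuclideanSpace ℝ (Fin D)) ℂ) (n : ℕ) :
    ∃ C : ℝ, 0 ≤ C ∧ ∀ (s : ℝ) (q : EuclideanSpace ℝ (Fin D)), 0 < s →
      ‖fourierHat (⇑h) s q‖ * s ^ n ≤ C := by
  classical
  haveI : (volume : Measure (ℝ × EuclideanSpace ℝ (Fin D))).IsAddHaarMeasure := by
    have : (volume : Measure (ℝ × EuclideanSpace ℝ (Fin D)))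
        = (volume : Measure ℝ).prod volume := rfl
    rw [this]; infer_instance
  set S : ℝ := ∑ p ∈ Finset.range (0 + 1) ×ˢ Finset.range (n + 1),
      ∫ v : ℝ × EuclideanSpace ℝ (Fin D), ‖v‖ ^ p.1 * ‖iteratedFDeriv ℝ p.2 (⇑h) v‖ with hS
  have hS0 : 0 ≤ S := by
    refine Finset.sum_nonneg fun p _ => integral_nonneg fun v => by positivity
  refine ⟨2 ^ n * (2 * Real.pi) ^ n * S, by positivity, fun s q hs => ?_⟩
  have h'f : ∀ (k j : ℕ), (k : ℕ∞) ≤ ⊤ → (j : ℕ∞) ≤ ⊤ →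
      Integrable (fun v : ℝ × EuclideanSpace ℝ (Fin D) =>
        ‖v‖ ^ k * ‖iteratedFDeriv ℝ j (⇑h) v‖) volume :=
    fun k j _ _ => h.integrable_pow_mul_iteratedFDeriv volume k j
  have key := VectorFourier.pow_mul_norm_iteratedFDeriv_fourierIntegral_le (L := Lform D)
    (K := ⊤) (N := ⊤) (h.smooth ⊤) h'f (k := 0) (n := n) le_top le_top
    ((1 : ℝ), (0 : EuclideanSpace ℝ (Fin D))) ((2 * Real.pi)⁻¹ * s, (2 * Real.pi)⁻¹ • q)
  have hπ : (0 : ℝ) < 2 * Real.pi := by positivity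
  have hLv : Lform D ((1 : ℝ), (0 : EuclideanSpace ℝ (Fin D)))
      ((2 * Real.pi)⁻¹ * s, (2 * Real.pi)⁻¹ • q) = (2 * Real.pi)⁻¹ * s := by
    simp [Lform_apply]
  have hnv : ‖((1 : ℝ), (0 : EuclideanSpace ℝ (Fin D)))‖ = 1 := by
    simp [Prod.norm_def]
  rw [hLv, hnv, norm_iteratedFDeriv_zero, one_pow, one_mul, pow_zero, one_mul,
    abs_of_pos (by positivity : (0:ℝ) < (2 * Real.pi)⁻¹ * s)] at key
  rw [fourierHat_eq]
  have expand : ((2 * Real.pi)⁻¹ * s) ^ n = ((2 * Real.pi) ^ n)⁻¹ * s ^ n := by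
    rw [mul_pow, inv_pow]
  rw [expand] at key
  -- key : (2π)^n⁻¹ * s^n * ‖F w‖ ≤ (2*0+2)^n * S
  have key2 : s ^ n * ‖VectorFourier.fourierIntegral Real.fourierChar volume
        (Lform D).toLinearMap₁₂ (⇑h) ((2 * Real.pi)⁻¹ * s, (2 * Real.pi)⁻¹ • q)‖
      ≤ (2 * Real.pi) ^ n * ((2 * (0:ℕ) + 2) ^ n * S) := by
    have := mul_le_mul_of_nonneg_left key (le_of_lt (by positivity : (0:ℝ) < (2 * Real.pi) ^ n))
    calc s ^ n * ‖_‖ = (2 * Real.pi) ^ n * (((2 * Real.pi) ^ n)⁻¹ * s ^ n * ‖_‖) := by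
          field_simp
      _ ≤ (2 * Real.pi) ^ n * ((2 * (0:ℕ) + 2) ^ n * S) := this
  rw [mul_comm] at key2
  refine key2.trans (le_of_eq ?_)
  norm_num
  ring

lemma omega_pos {D : ℕ} {m : ℝ} (hm : 0 < m) (p : EuclideanSpace ℝ (Fin D)) :
    0 < omegaM m p :=
  Real.sqrt_pos.2 (by positivity)

lemma le_omega {D : ℕ} {m : ℝ} (hm : 0 < m) (p : EuclideanSpace ℝ (Fin D)) :
    m ≤ omegaM m p := by
  rw [omegaM]
  nlinarith [Real.sqrt_nonneg (m ^ 2 + ‖p‖ ^ 2), sq_nonneg ‖p‖,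
    Real.sq_sqrt (show (0:ℝ) ≤ m ^ 2 + ‖p‖ ^ 2 by positivity)]

lemma norm_le_omega {D : ℕ} {m : ℝ} (hm : 0 < m) (p : EuclideanSpace ℝ (Fin D)) :
    ‖p‖ ≤ omegaM m p := by
  rw [omegaM]
  nlinarith [Real.sqrt_nonneg (m ^ 2 + ‖p‖ ^ 2), norm_nonneg p,
    Real.sq_sqrt (show (0:ℝ) ≤ m ^ 2 + ‖p‖ ^ 2 by positivity)]

lemma one_add_norm_le_omega {D : ℕ} {m : ℝ} (hm : 0 < m) (p : EuclideanSpace ℝ (Fin D)) :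
    1 + ‖p‖ ≤ ((1 + m) / m) * omegaM m p := by
  have h1 : (1 : ℝ) ≤ omegaM m p / m := (one_le_div hm).2 (le_omega hm p)
  have h2 := norm_le_omega hm p
  have : ((1 + m) / m) * omegaM m p = omegaM m p / m + omegaM m p := by
    field_simp
  rw [this]
  exact add_le_add h1 h2

lemma omega_measurable {D : ℕ} (m : ℝ) : Measurable (fun p : EuclideanSpace ℝ (Fin D) => omegaM m p) := by
  have : Continuous (fun p : EuclideanSpace ℝ (Fin D) => omegaM m p) := by
    unfold omegaM
    exact (Real.continuous_sqrt).comp (by continuity)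
  exact this.measurable

lemma lintegral_omega_pow_lt_top {D : ℕ} {m : ℝ} (hm : 0 < m) :
    ∫⁻ p : EuclideanSpace ℝ (Fin D), ENNReal.ofReal ((omegaM m p ^ (D + 2))⁻¹) ∂volume < ⊤ := by
  set a : ℝ := (1 + m) / m with ha
  have ha0 : 0 < a := by positivity
  set c0 : ℝ := a ^ (D + 2) with hc0
  have hr : (Module.finrank ℝ (EuclideanSpace ℝ (Fin D)) : ℝ) < ((D : ℝ) + 2) := by
    rw [finrank_euclideanSpace_fin]; linarith
  have hint : Integrable (fun p : EuclideanSpace ℝ (Fin D) =>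
      c0 * (1 + ‖p‖) ^ (-((D : ℝ) + 2))) volume :=
    (integrable_one_add_norm hr).const_mul c0
  have hnn : 0 ≤ᵐ[volume] fun p : EuclideanSpace ℝ (Fin D) =>
      c0 * (1 + ‖p‖) ^ (-((D : ℝ) + 2)) := by
    refine Filter.Eventually.of_forall fun p => ?_
    have : (0:ℝ) < 1 + ‖p‖ := by positivity
    positivity
  have hfin := (hasFiniteIntegral_iff_ofReal hnn).1 hint.hasFiniteIntegral
  refine lt_of_le_of_lt (lintegral_mono fun p => ?_) hfin
  apply ENNReal.ofReal_le_ofReal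
  have h1p : (0:ℝ) < 1 + ‖p‖ := by positivity
  have hrpow : (1 + ‖p‖) ^ (-((D : ℝ) + 2)) = ((1 + ‖p‖) ^ (D + 2))⁻¹ := by
    rw [show -((D : ℝ) + 2) = -(((D + 2 : ℕ) : ℝ)) by push_cast; ring,
      Real.rpow_neg h1p.le, Real.rpow_natCast]
  rw [hrpow]
  have hω : 0 < omegaM m p := omega_pos hm p
  have hle : (1 + ‖p‖) ^ (D + 2) ≤ c0 * omegaM m p ^ (D + 2) := by
    rw [hc0, ← mul_pow]
    exact pow_le_pow_left₀ (by positivity) (one_add_norm_le_omega hm p) _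
  calc (omegaM m p ^ (D + 2))⁻¹ = c0 * (c0 * omegaM m p ^ (D + 2))⁻¹ := by
        field_simp
        rw [div_self (by rw [hc0]; positivity)]
    _ ≤ c0 * ((1 + ‖p‖) ^ (D + 2))⁻¹ := by
        gcongr


/-- for a Schwartz function `h : ℝ^{1+D} → ℂ`, the double integral
`∫∫ |ĥ(ω_p + ω_q, p + q)|² dμ_m(p) dμ_m(q)` is finite. -/
theorem stmt_17 (m : ℝ) (hm : 0 < m) (D : ℕ) (hD : 1 ≤ D)
    (h : SchwartzMap (ℝ × EuclideanSpace ℝ (Fin D)) ℂ) :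
    (∫⁻ q, ∫⁻ p, ENNReal.ofReal
        (‖fourierHat (⇑h) (omegaM m p + omegaM m q) (p + q)‖ ^ 2)
      ∂(muM m D) ∂(muM m D)) < ⊤ := by
  obtain ⟨C, hC0, hC⟩ := fourierHat_decay h (D + 1)
  have hωmeas := omega_measurable (D := D) m
  have hdens : Measurable (fun p : EuclideanSpace ℝ (Fin D) =>
      ENNReal.ofReal (1 / ((2 * Real.pi) ^ D * (2 * omegaM m p)))) := by
    apply Measurable.ennreal_ofReal
    exact (measurable_const.div ((measurable_const.mul hωmeas).const_mul _))
  have hg : Measurable (fun p : EuclideanSpace ℝ (Fin D) =>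
      ENNReal.ofReal ((omegaM m p ^ (D + 1))⁻¹)) := by
    apply Measurable.ennreal_ofReal
    exact (hωmeas.pow_const _).inv
  set I := ∫⁻ p, ENNReal.ofReal ((omegaM m p ^ (D + 1))⁻¹) ∂(muM m D) with hIdef
  have hIlt : I < ⊤ := by
    rw [hIdef, muM, lintegral_withDensity_eq_lintegral_mul _ hdens hg]
    refine lt_of_le_of_lt (lintegral_mono fun p => ?_) (lintegral_omega_pow_lt_top hm)
    simp only [Pi.mul_apply]
    have hω : 0 < omegaM m p := omega_pos hm p
    rw [← ENNReal.ofReal_mul (by positivity)]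
    apply ENNReal.ofReal_le_ofReal
    have h2π : (1:ℝ) ≤ (2 * Real.pi) ^ D := one_le_pow₀ (by nlinarith [Real.pi_gt_three])
    have hle : omegaM m p ≤ (2 * Real.pi) ^ D * (2 * omegaM m p) := by nlinarith
    have hd : 1 / ((2 * Real.pi) ^ D * (2 * omegaM m p)) ≤ (omegaM m p)⁻¹ := by
      rw [← one_div]
      exact one_div_le_one_div_of_le hω hle
    calc 1 / ((2 * Real.pi) ^ D * (2 * omegaM m p)) * (omegaM m p ^ (D + 1))⁻¹
        ≤ (omegaM m p)⁻¹ * (omegaM m p ^ (D + 1))⁻¹ := by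
          gcongr
      _ = (omegaM m p ^ (D + 2))⁻¹ := by
          rw [show omegaM m p ^ (D + 2) = omegaM m p * omegaM m p ^ (D + 1) from pow_succ' _ _,
            mul_inv]
  have hpb : ∀ p q : EuclideanSpace ℝ (Fin D),
      ENNReal.ofReal (‖fourierHat (⇑h) (omegaM m p + omegaM m q) (p + q)‖ ^ 2)
        ≤ (ENNReal.ofReal (C ^ 2) * ENNReal.ofReal ((omegaM m q ^ (D + 1))⁻¹)) *
          ENNReal.ofReal ((omegaM m p ^ (D + 1))⁻¹) := by
    intro p q
    have hωp : 0 < omegaM m p := omega_pos hm p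
    have hωq : 0 < omegaM m q := omega_pos hm q
    have hs : 0 < omegaM m p + omegaM m q := by positivity
    set A := ‖fourierHat (⇑h) (omegaM m p + omegaM m q) (p + q)‖ with hA
    have hA0 : 0 ≤ A := norm_nonneg _
    have habs := hC (omegaM m p + omegaM m q) (p + q) hs
    set s := omegaM m p + omegaM m q with hsdef
    have hsx : omegaM m p ^ (D + 1) ≤ s ^ (D + 1) :=
      pow_le_pow_left₀ hωp.le (le_add_of_nonneg_right hωq.le) _
    have hsy : omegaM m q ^ (D + 1) ≤ s ^ (D + 1) :=
      pow_le_pow_left₀ hωq.le (le_add_of_nonneg_left hωp.le) _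
    have h1 : A ^ 2 * (omegaM m p ^ (D + 1) * omegaM m q ^ (D + 1)) ≤ C ^ 2 := by
      have hmul : omegaM m p ^ (D + 1) * omegaM m q ^ (D + 1) ≤ s ^ (D + 1) * s ^ (D + 1) :=
        mul_le_mul hsx hsy (by positivity) (by positivity)
      calc A ^ 2 * (omegaM m p ^ (D + 1) * omegaM m q ^ (D + 1))
          ≤ A ^ 2 * (s ^ (D + 1) * s ^ (D + 1)) := by gcongr <;> positivity
        _ = (A * s ^ (D + 1)) ^ 2 := by ring
        _ ≤ C ^ 2 := pow_le_pow_left₀ (by positivity) habs 2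
    have h2 : A ^ 2 ≤ C ^ 2 * (omegaM m q ^ (D + 1))⁻¹ * (omegaM m p ^ (D + 1))⁻¹ := by
      have heq : C ^ 2 * (omegaM m q ^ (D + 1))⁻¹ * (omegaM m p ^ (D + 1))⁻¹
          = C ^ 2 / (omegaM m p ^ (D + 1) * omegaM m q ^ (D + 1)) := by
        field_simp
      rw [heq, le_div_iff₀ (by positivity)]
      exact h1
    calc ENNReal.ofReal (A ^ 2)
        ≤ ENNReal.ofReal (C ^ 2 * (omegaM m q ^ (D + 1))⁻¹ * (omegaM m p ^ (D + 1))⁻¹) :=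
          ENNReal.ofReal_le_ofReal h2
      _ = (ENNReal.ofReal (C ^ 2) * ENNReal.ofReal ((omegaM m q ^ (D + 1))⁻¹)) *
          ENNReal.ofReal ((omegaM m p ^ (D + 1))⁻¹) := by
          rw [ENNReal.ofReal_mul (by positivity), ENNReal.ofReal_mul (by positivity)]
  have hinner : ∀ q : EuclideanSpace ℝ (Fin D),
      (∫⁻ p, ENNReal.ofReal
          (‖fourierHat (⇑h) (omegaM m p + omegaM m q) (p + q)‖ ^ 2) ∂(muM m D))
        ≤ (ENNReal.ofReal (C ^ 2) * I) * ENNReal.ofReal ((omegaM m q ^ (D + 1))⁻¹) := by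
    intro q
    calc (∫⁻ p, ENNReal.ofReal
          (‖fourierHat (⇑h) (omegaM m p + omegaM m q) (p + q)‖ ^ 2) ∂(muM m D))
        ≤ ∫⁻ p, (ENNReal.ofReal (C ^ 2) * ENNReal.ofReal ((omegaM m q ^ (D + 1))⁻¹)) *
            ENNReal.ofReal ((omegaM m p ^ (D + 1))⁻¹) ∂(muM m D) :=
          lintegral_mono fun p => hpb p q
      _ = (ENNReal.ofReal (C ^ 2) * ENNReal.ofReal ((omegaM m q ^ (D + 1))⁻¹)) * I := by
          rw [lintegral_const_mul' _ _
            (ENNReal.mul_ne_top ENNReal.ofReal_ne_top ENNReal.ofReal_ne_top)]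
      _ = (ENNReal.ofReal (C ^ 2) * I) * ENNReal.ofReal ((omegaM m q ^ (D + 1))⁻¹) := by
          ring
  calc (∫⁻ q, ∫⁻ p, ENNReal.ofReal
        (‖fourierHat (⇑h) (omegaM m p + omegaM m q) (p + q)‖ ^ 2)
      ∂(muM m D) ∂(muM m D))
      ≤ ∫⁻ q, (ENNReal.ofReal (C ^ 2) * I) * ENNReal.ofReal ((omegaM m q ^ (D + 1))⁻¹)
          ∂(muM m D) := lintegral_mono hinner
    _ = (ENNReal.ofReal (C ^ 2) * I) * I := by
        rw [lintegral_const_mul' _ _ (ENNReal.mul_ne_top ENNReal.ofReal_ne_top hIlt.ne)]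
    _ < ⊤ := by
        refine ENNReal.mul_lt_top (ENNReal.mul_lt_top ?_ hIlt) hIlt
        exact ENNReal.ofReal_lt_top
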